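/- Let σ be a full-rank density matrix, Π a positive semidefinite operator with Π ≤ 1 (i.e., 1 − Π positive semidefinite), and β > 0. Then the minimum value of Tr(Πρ) + β·S(ρ‖σ) over density matrices ρ equals −β · log Tr(exp(log σ − Π/β)), and this value is at most Tr(Πσ). -/

import Mathlib

open Matrix ComplexOrder Kronecker
noncomputable section
variable {m n : Type*} [Fintype n] [DecidableEq n] [Fintype m] [DecidableEq m]

/-- Functional calculus for Hermitian matrices via the spectral theorem
(junk value `0` on non-Hermitian input). -/
def matFun (f : ℝ → ℝ) (A : Matrix n n ℂ) : Matrix n n ℂ :=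
  if hA : A.IsHermitian then
    (hA.eigenvectorUnitary : Matrix n n ℂ) *
      Matrix.diagonal (fun i => (f (hA.eigenvalues i) : ℂ)) *
      (star hA.eigenvectorUnitary : Matrix n n ℂ)
  else 0

/-- Matrix logarithm on the support (`Real.log 0 = 0` gives the `0 log 0 = 0` convention). -/
def matLog (A : Matrix n n ℂ) : Matrix n n ℂ := matFun Real.log A

/-- Matrix exponential (of a Hermitian matrix). -/
def matExp (A : Matrix n n ℂ) : Matrix n n ℂ := matFun Real.exp A

/-- A density matrix: positive semidefinite with trace one. -/
def IsDensity (ρ : Matrix n n ℂ) : Prop := ρ.PosSemidef ∧ ρ.trace = 1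

/-- Quantum relative entropy `S(ρ‖σ) = Tr (ρ (log ρ − log σ))`. -/
def qRelEnt (ρ σ : Matrix n n ℂ) : ℂ := (ρ * (matLog ρ - matLog σ)).trace

/-- `k`-fold tensor power of a matrix. -/
def tpow (ρ : Matrix n n ℂ) (k : ℕ) : Matrix (Fin k → n) (Fin k → n) ℂ :=
  Matrix.of fun i j => ∏ t, ρ (i t) (j t)

/-- Trace norm: the sum of singular values. -/
def traceNorm (A : Matrix n n ℂ) : ℝ :=
  ∑ i, Real.sqrt ((Matrix.posSemidef_conjTranspose_mul_self A).1.eigenvalues i)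

/-- Projection onto the strictly positive eigenspace of a Hermitian matrix. -/
def posProj (A : Matrix n n ℂ) : Matrix n n ℂ := matFun (fun x => if 0 < x then 1 else 0) A

/-- Positive part in the Jordan decomposition of a Hermitian matrix. -/
def posPart (A : Matrix n n ℂ) : Matrix n n ℂ := matFun (fun x => max x 0) A

/-- Projection onto the support of a Hermitian (e.g. PSD) matrix. -/
def suppProj (A : Matrix n n ℂ) : Matrix n n ℂ := matFun (fun x => if x = 0 then 0 else 1) A

set_option linter.unusedSectionVars false

/-! ### Auxiliary lemmas -/

lemma eval_map_ofReal (p : Polynomial ℝ) (x : ℝ) :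
    (p.map (algebraMap ℝ ℂ)).eval ((x : ℂ)) = ((p.eval x : ℝ) : ℂ) := by
  rw [Polynomial.eval_map]
  exact Polynomial.eval₂_at_apply (algebraMap ℝ ℂ) x

lemma aeval_diagonal' (p : Polynomial ℂ) (d : n → ℂ) :
    Polynomial.aeval (Matrix.diagonal d) p = Matrix.diagonal (fun i => p.eval (d i)) := by
  have h := Polynomial.aeval_algHom_apply (Matrix.diagonalAlgHom (n := n) ℂ (α := ℂ)) d p
  simp only [Matrix.diagonalAlgHom_apply] at h
  rw [h]
  have h3 : (Polynomial.aeval d) p = fun i => p.eval (d i) := by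
    funext i
    have h2 := Polynomial.aeval_algHom_apply (Pi.evalAlgHom ℂ (fun _ : n => ℂ) i) d p
    simp only [Pi.evalAlgHom_apply] at h2
    rw [← h2]
    simp [Polynomial.aeval_def, Algebra.algebraMap_self]
  rw [h3]

lemma conjPow (U M : Matrix n n ℂ) (hU : U * star U = 1) (hU' : star U * U = 1) (k : ℕ) :
    (U * M * star U) ^ k = U * M ^ k * star U := by
  induction k with
  | zero => rw [pow_zero, pow_zero, mul_one, hU]
  | succ k ih =>
    rw [pow_succ, ih, pow_succ]
    calc U * M ^ k * star U * (U * M * star U) = U * M ^ k * (star U * U) * M * star U := by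
          noncomm_ring
      _ = U * (M ^ k * M) * star U := by rw [hU']; noncomm_ring

lemma aeval_conj (p : Polynomial ℂ) (U M : Matrix n n ℂ) (hU : U * star U = 1)
    (hU' : star U * U = 1) :
    Polynomial.aeval (U * M * star U) p = U * Polynomial.aeval M p * star U := by
  induction p using Polynomial.induction_on' with
  | add p q hp hq => simp [hp, hq, mul_add, add_mul]
  | monomial k a =>
    simp only [Polynomial.aeval_monomial, conjPow U M hU hU' k]
    rw [Algebra.algebraMap_eq_smul_one]
    simp only [Algebra.smul_mul_assoc, Algebra.mul_smul_comm, one_mul]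

lemma isHermitian_real_diagonal (d : n → ℝ) :
    (Matrix.diagonal (fun i => ((d i : ℝ) : ℂ))).IsHermitian := by
  rw [Matrix.IsHermitian, Matrix.diagonal_conjTranspose]
  have : (star fun i => ((d i : ℝ) : ℂ)) = fun i => ((d i : ℝ) : ℂ) := by
    funext i; simp [Pi.star_apply, Complex.conj_ofReal]
  rw [this]

lemma isHermitian_conj_diag (U : Matrix n n ℂ) (d : n → ℝ) :
    (U * Matrix.diagonal (fun i => ((d i : ℝ) : ℂ)) * star U).IsHermitian := by
  rw [Matrix.star_eq_conjTranspose]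
  exact Matrix.isHermitian_mul_mul_conjTranspose U (isHermitian_real_diagonal d)

/-- Well-definedness of the functional calculus: it can be computed from any
unitary diagonalization. -/
lemma matFun_decomp (f : ℝ → ℝ) (U : Matrix n n ℂ) (hU : U ∈ Matrix.unitaryGroup n ℂ)
    (d : n → ℝ) {A : Matrix n n ℂ}
    (hA : A = U * Matrix.diagonal (fun i => ((d i : ℝ) : ℂ)) * star U) :
    matFun f A = U * Matrix.diagonal (fun i => ((f (d i) : ℝ) : ℂ)) * star U := by
  have hU1 : star U * U = 1 := hU.1
  have hU2 : U * star U = 1 := hU.2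
  have hHerm : A.IsHermitian := hA ▸ isHermitian_conj_diag U d
  set V : Matrix n n ℂ := (hHerm.eigenvectorUnitary : Matrix n n ℂ) with hV
  have hV1 : star V * V = 1 := Matrix.UnitaryGroup.star_mul_self _
  have hV2 : V * star V = 1 := Matrix.mem_unitaryGroup_iff.mp hHerm.eigenvectorUnitary.2
  have spec : A = V * Matrix.diagonal (fun i => ((hHerm.eigenvalues i : ℝ) : ℂ)) * star V := by
    exact hHerm.spectral_theorem
  set s : Finset ℝ := Finset.image d Finset.univ ∪ Finset.image hHerm.eigenvalues Finset.univ
    with hs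
  set q : Polynomial ℝ := Lagrange.interpolate s id f with hqdef
  have hq : ∀ x ∈ s, q.eval x = f x := fun x hx =>
    Lagrange.eval_interpolate_at_node f (Set.injOn_id _) hx
  set p : Polynomial ℂ := q.map (algebraMap ℝ ℂ) with hp
  have h1 : Polynomial.aeval A p = U * Matrix.diagonal (fun i => ((f (d i) : ℝ) : ℂ)) * star U := by
    rw [hA, aeval_conj p U _ hU2 hU1, aeval_diagonal']
    have he : (fun i => p.eval ((d i : ℂ))) = fun i => ((f (d i) : ℝ) : ℂ) := by
      funext i
      rw [hp, eval_map_ofReal,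
        hq (d i) (Finset.mem_union_left _ (Finset.mem_image_of_mem d (Finset.mem_univ i)))]
    rw [he]
  have h2 : Polynomial.aeval A p = matFun f A := by
    rw [matFun, dif_pos hHerm]
    conv_lhs => rw [spec]
    rw [aeval_conj p V _ hV2 hV1, aeval_diagonal']
    have he : (fun i => p.eval ((hHerm.eigenvalues i : ℂ)))
        = fun i => ((f (hHerm.eigenvalues i) : ℝ) : ℂ) := by
      funext i
      rw [hp, eval_map_ofReal,
        hq _ (Finset.mem_union_right _ (Finset.mem_image_of_mem _ (Finset.mem_univ i)))]
    rw [he]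
  rw [← h2, h1]

lemma matFun_isHermitian (f : ℝ → ℝ) {A : Matrix n n ℂ} (hA : A.IsHermitian) :
    (matFun f A).IsHermitian := by
  rw [matFun, dif_pos hA]
  exact isHermitian_conj_diag _ _

lemma conj_mul_conj (U A B : Matrix n n ℂ) (hU : star U * U = 1) :
    (U * A * star U) * (U * B * star U) = U * (A * B) * star U := by
  calc (U * A * star U) * (U * B * star U) = U * A * (star U * U) * B * star U := by noncomm_ring
    _ = U * (A * B) * star U := by rw [hU]; noncomm_ring

lemma trace_conj (U M : Matrix n n ℂ) (hU : star U * U = 1) :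
    (U * M * star U).trace = M.trace := by
  rw [Matrix.trace_mul_cycle, hU, Matrix.one_mul]

lemma trace_conj_mul_conj (U V : Matrix n n ℂ) (hU : star U * U = 1) (hU' : U * star U = 1)
    (a b : n → ℂ) :
    ((U * Matrix.diagonal a * star U) * (V * Matrix.diagonal b * star V)).trace
      = ∑ i, ∑ j, a i * b j * (Complex.normSq ((star U * V) i j) : ℂ) := by
  set W : Matrix n n ℂ := star U * V with hW
  have hsW : star W = star V * U := by rw [hW, Matrix.star_mul, star_star]
  have h1 : U * (Matrix.diagonal a * W * Matrix.diagonal b * star W) * star U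
      = (U * Matrix.diagonal a * star U) * (V * Matrix.diagonal b * star V) := by
    rw [hW, hsW]
    simp only [Matrix.mul_assoc]
    rw [hU', Matrix.mul_one]
  rw [← h1, trace_conj _ _ hU, Matrix.trace]
  have e2 : ∀ i, (Matrix.diagonal a * W * Matrix.diagonal b * star W).diag i
      = ∑ j, a i * W i j * b j * star (W i j) := by
    intro i
    rw [Matrix.diag_apply, Matrix.mul_apply]
    refine Finset.sum_congr rfl fun j _ => ?_
    rw [Matrix.mul_diagonal, Matrix.diagonal_mul, Matrix.star_apply]
  rw [Finset.sum_congr rfl fun i _ => e2 i]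
  refine Finset.sum_congr rfl fun i _ => Finset.sum_congr rfl fun j _ => ?_
  have hms : (W i j) * star (W i j) = (Complex.normSq (W i j) : ℂ) := Complex.mul_conj _
  calc a i * W i j * b j * star (W i j) = a i * b j * (W i j * star (W i j)) := by ring
    _ = a i * b j * (Complex.normSq (W i j) : ℂ) := by rw [hms]

lemma sum_normSq_row (W : Matrix n n ℂ) (hW : W * star W = 1) (i : n) :
    ∑ j, Complex.normSq (W i j) = 1 := by
  have h := congrArg (fun M : Matrix n n ℂ => M i i) hW
  simp only [Matrix.mul_apply, Matrix.one_apply_eq, Matrix.star_apply] at h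
  have h2 : ∑ j, (Complex.normSq (W i j) : ℂ) = 1 := by
    rw [← h]
    exact Finset.sum_congr rfl fun j _ => (Complex.mul_conj _).symm
  have h3 := congrArg Complex.re h2
  simpa using h3

/-- The key scalar inequality underlying Klein's inequality. -/
lemma klein_real (a b : n → ℝ) (p : n → n → ℝ)
    (ha : ∀ i, 0 ≤ a i) (hb : ∀ j, 0 < b j)
    (hp : ∀ i j, 0 ≤ p i j) (hrow : ∀ i, ∑ j, p i j = 1) (hcol : ∀ j, ∑ i, p i j = 1)
    (hsa : ∑ i, a i = 1) (hsb : ∑ j, b j = 1) :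
    0 ≤ ∑ i, a i * Real.log (a i) - ∑ i, ∑ j, a i * p i j * Real.log (b j) := by
  set q : n → ℝ := fun i => ∑ j, p i j * b j with hq
  have hqpos : ∀ i, 0 < q i := by
    intro i
    have hex : ∃ j ∈ Finset.univ, 0 < p i j * b j := by
      by_contra hcon
      push_neg at hcon
      have : ∑ j, p i j = 0 := by
        apply Finset.sum_eq_zero
        intro j _
        have h0 : p i j * b j ≤ 0 := hcon j (Finset.mem_univ j)
        have h1 : 0 ≤ p i j * b j := mul_nonneg (hp i j) (hb j).le
        have : p i j * b j = 0 := le_antisymm h0 h1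
        exact (mul_eq_zero.mp this).resolve_right (hb j).ne'
      rw [hrow i] at this; norm_num at this
    exact Finset.sum_pos' (fun j _ => mul_nonneg (hp i j) (hb j).le) hex
  have hsq : ∑ i, q i = 1 := by
    rw [hq]
    simp only []
    rw [Finset.sum_comm]
    calc ∑ j, ∑ i, p i j * b j = ∑ j, (∑ i, p i j) * b j := by
          simp [Finset.sum_mul]
      _ = 1 := by simp only [hcol, one_mul, hsb]
  have jensen : ∀ i, ∑ j, p i j * Real.log (b j) ≤ Real.log (q i) := by
    intro i
    have := strictConcaveOn_log_Ioi.concaveOn.le_map_sum (t := Finset.univ) (w := p i) (p := b)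
      (fun j _ => hp i j) (hrow i) (fun j _ => Set.mem_Ioi.mpr (hb j))
    simpa [smul_eq_mul] using this
  have point : ∀ i, a i - q i ≤ a i * Real.log (a i) - a i * Real.log (q i) := by
    intro i
    rcases eq_or_lt_of_le (ha i) with h0 | hpos
    · rw [← h0]; simp [(hqpos i).le]
    · have hdiv : 0 < q i / a i := div_pos (hqpos i) hpos
      have hlog := Real.log_le_sub_one_of_pos hdiv
      rw [Real.log_div (hqpos i).ne' hpos.ne'] at hlog
      have hmul := mul_le_mul_of_nonneg_left hlog hpos.le
      rw [mul_sub, mul_sub, mul_one] at hmul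
      have h2 : a i * (q i / a i) = q i := by field_simp
      linarith [hmul, h2.le, h2.ge]
  calc (0:ℝ) = ∑ i, (a i - q i) := by rw [Finset.sum_sub_distrib, hsa, hsq]; ring
    _ ≤ ∑ i, (a i * Real.log (a i) - a i * Real.log (q i)) :=
        Finset.sum_le_sum (fun i _ => point i)
    _ ≤ ∑ i, a i * Real.log (a i) - ∑ i, ∑ j, a i * p i j * Real.log (b j) := by
        rw [Finset.sum_sub_distrib]
        apply sub_le_sub_left
        apply Finset.sum_le_sum
        intro i _
        calc ∑ j, a i * p i j * Real.log (b j) = a i * ∑ j, p i j * Real.log (b j) := by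
              rw [Finset.mul_sum]; congr 1; funext j; ring
          _ ≤ a i * Real.log (q i) := mul_le_mul_of_nonneg_left (jensen i) (ha i)

/-- Klein's inequality: the quantum relative entropy with respect to a positive definite
density matrix is a nonnegative real number. -/
lemma qRelEnt_real_nonneg {ρ τ : Matrix n n ℂ} (hρ : IsDensity ρ) (hτ : IsDensity τ)
    (hτpd : τ.PosDef) : ∃ S : ℝ, qRelEnt ρ τ = (S : ℂ) ∧ 0 ≤ S := by
  have hρh : ρ.IsHermitian := hρ.1.1
  have hτh : τ.IsHermitian := hτ.1.1
  set U : Matrix n n ℂ := (hρh.eigenvectorUnitary : Matrix n n ℂ) with hUdef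
  set V : Matrix n n ℂ := (hτh.eigenvectorUnitary : Matrix n n ℂ) with hVdef
  set a : n → ℝ := hρh.eigenvalues with hadef
  set b : n → ℝ := hτh.eigenvalues with hbdef
  have hU1 : star U * U = 1 := Matrix.UnitaryGroup.star_mul_self _
  have hU2 : U * star U = 1 := Matrix.mem_unitaryGroup_iff.mp hρh.eigenvectorUnitary.2
  have hV1 : star V * V = 1 := Matrix.UnitaryGroup.star_mul_self _
  have hV2 : V * star V = 1 := Matrix.mem_unitaryGroup_iff.mp hτh.eigenvectorUnitary.2
  have hρspec : ρ = U * Matrix.diagonal (fun i => ((a i : ℝ) : ℂ)) * star U := by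
    exact hρh.spectral_theorem
  have hτspec : τ = V * Matrix.diagonal (fun i => ((b i : ℝ) : ℂ)) * star V := by
    exact hτh.spectral_theorem
  have hlogρ : matLog ρ = U * Matrix.diagonal (fun i => ((Real.log (a i) : ℝ) : ℂ)) * star U :=
    matFun_decomp Real.log U hρh.eigenvectorUnitary.2 a hρspec
  have hlogτ : matLog τ = V * Matrix.diagonal (fun i => ((Real.log (b i) : ℝ) : ℂ)) * star V :=
    matFun_decomp Real.log V hτh.eigenvectorUnitary.2 b hτspec
  set W : Matrix n n ℂ := star U * V with hWdef
  set p : n → n → ℝ := fun i j => Complex.normSq (W i j) with hpdef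
  -- traces
  have t1 : (ρ * matLog ρ).trace = ((∑ i, a i * Real.log (a i) : ℝ) : ℂ) := by
    rw [hlogρ, hρspec, conj_mul_conj _ _ _ hU1, trace_conj _ _ hU1,
      Matrix.diagonal_mul_diagonal, Matrix.trace_diagonal]
    push_cast
    rfl
  have t2 : (ρ * matLog τ).trace
      = ((∑ i, ∑ j, a i * Real.log (b j) * p i j : ℝ) : ℂ) := by
    rw [hlogτ, hρspec, trace_conj_mul_conj U V hU1 hU2]
    push_cast
    rfl
  have hsplit : qRelEnt ρ τ = (ρ * matLog ρ).trace - (ρ * matLog τ).trace := by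
    rw [qRelEnt, Matrix.mul_sub, Matrix.trace_sub]
  -- unitarity of W
  have hWW : W * star W = 1 := by
    have : star W = star V * U := by rw [hWdef, Matrix.star_mul, star_star]
    rw [hWdef, this, Matrix.mul_assoc, ← Matrix.mul_assoc V, hV2, Matrix.one_mul, hU1]
  have hWW' : star W * W = 1 := by
    have : star W = star V * U := by rw [hWdef, Matrix.star_mul, star_star]
    rw [hWdef, this, Matrix.mul_assoc, ← Matrix.mul_assoc U, hU2, Matrix.one_mul, hV1]
  have hrow : ∀ i, ∑ j, p i j = 1 := fun i => sum_normSq_row W hWW i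
  have hcol : ∀ j, ∑ i, p i j = 1 := by
    intro j
    have := sum_normSq_row (star W) (by rw [star_star]; exact hWW') j
    calc ∑ i, p i j = ∑ i, Complex.normSq ((star W) j i) := by
          refine Finset.sum_congr rfl fun i _ => ?_
          rw [Matrix.star_apply, Complex.star_def, Complex.normSq_conj]
      _ = 1 := this
  -- sums of eigenvalues
  have hsa : ∑ i, a i = 1 := by
    have htra : ρ.trace = ((∑ i, a i : ℝ) : ℂ) := by
      rw [hρspec, trace_conj _ _ hU1, Matrix.trace_diagonal]
      push_cast
      rfl
    have := htra.symm.trans hρ.2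
    exact_mod_cast this
  have hsb : ∑ j, b j = 1 := by
    have htrb : τ.trace = ((∑ j, b j : ℝ) : ℂ) := by
      rw [hτspec, trace_conj _ _ hV1, Matrix.trace_diagonal]
      push_cast
      rfl
    have := htrb.symm.trans hτ.2
    exact_mod_cast this
  refine ⟨∑ i, a i * Real.log (a i) - ∑ i, ∑ j, a i * p i j * Real.log (b j), ?_, ?_⟩
  · rw [hsplit, t1, t2]
    push_cast
    rw [sub_right_inj]
    push_cast
    refine Finset.sum_congr rfl fun i _ => Finset.sum_congr rfl fun j _ => by ring
  · exact klein_real a b p (fun i => hρ.1.eigenvalues_nonneg i) (fun j => hτpd.eigenvalues_pos j)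
      (fun i j => Complex.normSq_nonneg _) hrow hcol hsa hsb

lemma posDef_conj (U : Matrix n n ℂ) (hU1 : star U * U = 1) (hU2 : U * star U = 1)
    (d : n → ℝ) (hd : ∀ i, 0 < d i) :
    (U * Matrix.diagonal (fun i => ((d i : ℝ) : ℂ)) * star U).PosDef := by
  have hdiag : (Matrix.diagonal (fun i => ((d i : ℝ) : ℂ))).PosDef :=
    Matrix.posDef_diagonal_iff.mpr fun i => Complex.zero_lt_real.mpr (hd i)
  refine Matrix.PosDef.of_dotProduct_mulVec_pos (isHermitian_conj_diag U d) fun x hx => ?_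
  have hx' : star U *ᵥ x ≠ 0 := by
    intro hzero
    apply hx
    have : x = (U * star U) *ᵥ x := by rw [hU2, Matrix.one_mulVec]
    rw [this, ← Matrix.mulVec_mulVec, hzero, Matrix.mulVec_zero]
  have h := hdiag.dotProduct_mulVec_pos hx'
  have hrw : U * Matrix.diagonal (fun i => ((d i : ℝ) : ℂ)) * star U
      = (star U)ᴴ * Matrix.diagonal (fun i => ((d i : ℝ) : ℂ)) * (star U) := by
    rw [Matrix.star_eq_conjTranspose, Matrix.conjTranspose_conjTranspose]
  rw [hrw]
  simpa only [Matrix.star_mulVec, Matrix.dotProduct_mulVec, Matrix.vecMul_vecMul,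
    Matrix.star_eq_conjTranspose] using h

/-- The minimum of `Tr(Πρ) + β S(ρ‖σ)` over density matrices equals
`−β log Tr exp(log σ − Π/β)`, and is at most `Tr(Πσ)`. -/
theorem stmt4 (σ Pm : Matrix n n ℂ) (hσ : IsDensity σ) (hσpd : σ.PosDef)
    (hPm : Pm.PosSemidef) (hPm1 : ((1 : Matrix n n ℂ) - Pm).PosSemidef)
    (β : ℝ) (hβ : 0 < β) :
    let c : ℂ := -(β : ℂ) * (Real.log ((matExp (matLog σ - (β : ℂ)⁻¹ • Pm)).trace.re) : ℝ)
    IsLeast {x : ℂ | ∃ ρ, IsDensity ρ ∧ x = (Pm * ρ).trace + (β : ℂ) * qRelEnt ρ σ} c ∧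
    c ≤ (Pm * σ).trace := by
  intro c
  have hc : c = -(β : ℂ)
      * ((Real.log ((matExp (matLog σ - (β : ℂ)⁻¹ • Pm)).trace.re) : ℝ) : ℂ) := rfl
  -- nonempty index type
  have hn : Nonempty n := by
    by_contra hcon
    have hE : IsEmpty n := not_nonempty_iff.mp hcon
    have : σ.trace = 0 := by simp [Matrix.trace]
    rw [hσ.2] at this
    exact one_ne_zero this
  have hβ0 : (β : ℂ) ≠ 0 := Complex.ofReal_ne_zero.mpr hβ.ne'
  set H : Matrix n n ℂ := matLog σ - (β : ℂ)⁻¹ • Pm with hHdef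
  -- H is Hermitian
  have hlogσh : (matLog σ).IsHermitian := matFun_isHermitian _ hσpd.1
  have hstarβ : star ((β : ℂ)⁻¹) = (β : ℂ)⁻¹ := by
    rw [star_inv₀, Complex.star_def, Complex.conj_ofReal]
  have hH : H.IsHermitian := by
    rw [Matrix.IsHermitian, hHdef, Matrix.conjTranspose_sub, Matrix.conjTranspose_smul,
      hlogσh.eq, hPm.1.eq, hstarβ]
  set U : Matrix n n ℂ := (hH.eigenvectorUnitary : Matrix n n ℂ) with hUdef
  set lam : n → ℝ := hH.eigenvalues with hlamdef
  have hU1 : star U * U = 1 := Matrix.UnitaryGroup.star_mul_self _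
  have hU2 : U * star U = 1 := Matrix.mem_unitaryGroup_iff.mp hH.eigenvectorUnitary.2
  have hHspec : H = U * Matrix.diagonal (fun i => ((lam i : ℝ) : ℂ)) * star U := by
    exact hH.spectral_theorem
  have hexp : matExp H = U * Matrix.diagonal (fun i => ((Real.exp (lam i) : ℝ) : ℂ)) * star U :=
    matFun_decomp Real.exp U hH.eigenvectorUnitary.2 lam hHspec
  set Z : ℝ := ∑ i, Real.exp (lam i) with hZdef
  have hZpos : 0 < Z := Finset.sum_pos (fun i _ => Real.exp_pos _) Finset.univ_nonempty
  have htr : (matExp H).trace = ((Z : ℝ) : ℂ) := by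
    rw [hexp, trace_conj _ _ hU1, Matrix.trace_diagonal, hZdef, Complex.ofReal_sum]
  have hcZ : c = -(β : ℂ) * ((Real.log Z : ℝ) : ℂ) := by
    rw [hc, htr, Complex.ofReal_re]
  -- the optimal density matrix
  set g : n → ℝ := fun i => Real.exp (lam i) / Z with hgdef
  have hg : ∀ i, 0 < g i := fun i => div_pos (Real.exp_pos _) hZpos
  set ρstar : Matrix n n ℂ := U * Matrix.diagonal (fun i => ((g i : ℝ) : ℂ)) * star U
    with hρstardef
  have hρstar_pd : ρstar.PosDef := posDef_conj U hU1 hU2 g hg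
  have htrρstar : ρstar.trace = 1 := by
    rw [hρstardef, trace_conj _ _ hU1, Matrix.trace_diagonal]
    have : ∑ i, g i = 1 := by
      rw [hgdef]
      simp only []
      rw [← Finset.sum_div, ← hZdef, div_self hZpos.ne']
    push_cast
    rw [← Complex.ofReal_sum]
    rw [this]
    norm_num
  have hdens : IsDensity ρstar := ⟨hρstar_pd.posSemidef, htrρstar⟩
  have hlogρstar : matLog ρstar = H - ((Real.log Z : ℝ) : ℂ) • 1 := by
    rw [matLog, matFun_decomp Real.log U hH.eigenvectorUnitary.2 g hρstardef]
    have hlg : (fun i => ((Real.log (g i) : ℝ) : ℂ))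
        = fun i => ((lam i : ℝ) : ℂ) - ((Real.log Z : ℝ) : ℂ) := by
      funext i
      rw [hgdef]
      simp only []
      rw [Real.log_div (Real.exp_pos _).ne' hZpos.ne', Real.log_exp]
      push_cast
      ring
    rw [hlg]
    have hdiag : Matrix.diagonal (fun i => ((lam i : ℝ) : ℂ) - ((Real.log Z : ℝ) : ℂ))
        = Matrix.diagonal (fun i => ((lam i : ℝ) : ℂ)) - ((Real.log Z : ℝ) : ℂ) • 1 := by
      rw [Matrix.smul_one_eq_diagonal, Matrix.diagonal_sub]
    rw [hdiag, Matrix.mul_sub, Matrix.sub_mul, ← hHspec]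
    congr 1
    rw [Matrix.mul_smul, Matrix.mul_one, Matrix.smul_mul, hU2]
  have hlogσ_eq : matLog σ = H + (β : ℂ)⁻¹ • Pm := by
    rw [hHdef, sub_add_cancel]
  -- the key identity
  have key : ∀ ρ : Matrix n n ℂ, ρ.trace = 1 →
      (Pm * ρ).trace + (β : ℂ) * qRelEnt ρ σ = (β : ℂ) * qRelEnt ρ ρstar + c := by
    intro ρ htrρ
    rw [hcZ]
    have e1 : ρ * (matLog ρ - matLog σ)
        = ρ * matLog ρ - ρ * H - (β : ℂ)⁻¹ • (ρ * Pm) := by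
      rw [hlogσ_eq, Matrix.mul_sub, Matrix.mul_add, Matrix.mul_smul, sub_add_eq_sub_sub]
    have e2 : ρ * (matLog ρ - matLog ρstar)
        = ρ * matLog ρ - ρ * H + ((Real.log Z : ℝ) : ℂ) • ρ := by
      rw [hlogρstar, Matrix.mul_sub, Matrix.mul_sub, Matrix.mul_smul, Matrix.mul_one]
      have habc : ∀ (A B C : Matrix n n ℂ), A - (B - C) = A - B + C := fun A B C => by abel
      exact habc _ _ _
    rw [qRelEnt, qRelEnt, e1, e2]
    rw [Matrix.trace_sub, Matrix.trace_sub, Matrix.trace_add, Matrix.trace_smul,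
      Matrix.trace_smul, htrρ, Matrix.trace_mul_comm Pm ρ]
    simp only [smul_eq_mul, mul_one]
    simp only [Matrix.trace_sub]
    field_simp
    ring
  have hleast : IsLeast
      {x : ℂ | ∃ ρ, IsDensity ρ ∧ x = (Pm * ρ).trace + (β : ℂ) * qRelEnt ρ σ} c := by
    constructor
    · -- membership: the infimum is attained at ρstar
      refine ⟨ρstar, hdens, ?_⟩
      have hq0 : qRelEnt ρstar ρstar = 0 := by
        rw [qRelEnt, sub_self, Matrix.mul_zero, Matrix.trace_zero]
      rw [key ρstar htrρstar, hq0, mul_zero, zero_add]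
    · -- lower bound
      rintro x ⟨ρ, hρd, rfl⟩
      rw [key ρ hρd.2]
      obtain ⟨S, hSeq, hS0⟩ := qRelEnt_real_nonneg hρd hdens hρstar_pd
      rw [hSeq]
      have hpos : (0 : ℂ) ≤ (β : ℂ) * (S : ℂ) := by
        rw [← Complex.ofReal_mul]
        exact Complex.zero_le_real.mpr (mul_nonneg hβ.le hS0)
      calc c = 0 + c := (zero_add c).symm
        _ ≤ (β : ℂ) * (S : ℂ) + c := add_le_add_left hpos c
  refine ⟨hleast, ?_⟩
  have hq0 : qRelEnt σ σ = 0 := by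
    rw [qRelEnt, sub_self, Matrix.mul_zero, Matrix.trace_zero]
  have hval : (Pm * σ).trace + (β : ℂ) * qRelEnt σ σ = (Pm * σ).trace := by
    rw [hq0, mul_zero, add_zero]
  exact hleast.2 ⟨σ, hσ, hval.symm⟩
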